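/- Let U : Hilbr → Set preserve directed colimits. Then U maps every linear isometric embedding f : A → B with A infinite-dimensional to an injective function U(A) → U(B). -/

import Mathlib

open CategoryTheory CategoryTheory.Limits

/-- The category `Hilbr` of Hilbert spaces over `𝕜` (`ℝ` or `ℂ`) and linear isometric
embeddings. -/
structure HilbCat (𝕜 : Type) [RCLike 𝕜] : Type 1 where
  carrier : Type
  [nacg : NormedAddCommGroup carrier]
  [ips : InnerProductSpace 𝕜 carrier]
  [cs : CompleteSpace carrier]

attribute [instance] HilbCat.nacg HilbCat.ips HilbCat.cs

variable {𝕜 : Type} [RCLike 𝕜]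

instance : Category (HilbCat 𝕜) where
  Hom A B := A.carrier →ₗᵢ[𝕜] B.carrier
  id A := LinearIsometry.id
  comp f g := g.comp f
  id_comp f := rfl
  comp_id f := rfl
  assoc f g h := rfl

/-- View a morphism of `HilbCat` as a linear isometry. -/
def homFn {A B : HilbCat 𝕜} (f : A ⟶ B) : A.carrier →ₗᵢ[𝕜] B.carrier := f

/-- View a linear isometry as a morphism of `HilbCat`. -/
def toHom {A B : HilbCat 𝕜} (f : A.carrier →ₗᵢ[𝕜] B.carrier) : A ⟶ B := f

/-- A functor preserves directed colimits if it preserves colimits of shape `J` for every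
nonempty directed preorder `J`. -/
def PreservesDirectedColimits {C : Type*} [Category C] (U : C ⥤ Type) : Prop :=
  ∀ (J : Type) [Preorder J] [IsDirected J (· ≤ ·)] [Nonempty J],
    Nonempty (PreservesColimitsOfShape J U)

/-- `x ∈ U(A)` is supported on the subspace `A₀ ⊆ A` if any two morphisms out of `A`
agreeing on `A₀` are equalized by `x`. -/
def SuppOn (U : HilbCat 𝕜 ⥤ Type) (A : HilbCat 𝕜) (A₀ : Submodule 𝕜 A.carrier)
    (x : U.obj A) : Prop :=
  ∀ (B : HilbCat 𝕜) (f g : A ⟶ B), (∀ a ∈ A₀, homFn f a = homFn g a) →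
    U.map f x = U.map g x

/-- The Hilbert space `ℓ²(X)` as an object of `HilbCat`. -/
noncomputable def lpObj (𝕜 : Type) [RCLike 𝕜] (X : Type) : HilbCat 𝕜 :=
  ⟨lp (fun _ : X => 𝕜) 2⟩

/-- `A` has Hilbert dimension `c`: it admits an orthonormal (Hilbert) basis indexed by a type
of cardinality `c`. -/
def HasHilbertDim (A : HilbCat 𝕜) (c : Cardinal) : Prop :=
  ∃ (ι : Type) (_ : HilbertBasis ι 𝕜 A.carrier), Cardinal.mk ι = c

/-- `A` has Hilbert dimension `≥ c`. -/
def HasHilbertDimGE (A : HilbCat 𝕜) (c : Cardinal) : Prop :=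
  ∃ (ι : Type) (_ : HilbertBasis ι 𝕜 A.carrier), c ≤ Cardinal.mk ι


namespace Stmt14Aux

open Submodule in
/-- Inclusion of submodules as a linear isometry. -/
def inclLI {E : Type} [NormedAddCommGroup E] [InnerProductSpace 𝕜 E]
    {p q : Submodule 𝕜 E} (h : p ≤ q) : p →ₗᵢ[𝕜] q :=
  ⟨Submodule.inclusion h, fun _ => rfl⟩

@[simp] lemma inclLI_coe {E : Type} [NormedAddCommGroup E] [InnerProductSpace 𝕜 E]
    {p q : Submodule 𝕜 E} (h : p ≤ q) (x : p) : (inclLI (𝕜 := 𝕜) h x : E) = x := rfl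

section Diagram

variable (B : HilbCat 𝕜) (P : Submodule 𝕜 B.carrier → Prop)
  (hcomp : ∀ p, P p → CompleteSpace p)

/-- The diagram of subspaces satisfying `P`. -/
def diag : {p : Submodule 𝕜 B.carrier // P p} ⥤ HilbCat 𝕜 where
  obj p := @HilbCat.mk 𝕜 _ p.1 _ _ (hcomp p.1 p.2)
  map {p q} h := toHom (inclLI (leOfHom h))
  map_id p := rfl
  map_comp f g := rfl

/-- The cocone over the diagram of subspaces with apex `B`. -/
def cocone : Cocone (diag B P hcomp) where
  pt := B
  ι := { app := fun p => toHom (Submodule.subtypeₗᵢ p.1)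
         naturality := fun p q h => rfl }

variable {B P}
variable (hdir : ∀ p q, P p → P q → ∃ r, P r ∧ p ≤ r ∧ q ≤ r)

include hdir in
lemma app_eq (s : Cocone (diag B P hcomp)) {p q : {p : Submodule 𝕜 B.carrier // P p}}
    (b : B.carrier) (hbp : b ∈ p.1) (hbq : b ∈ q.1) :
    homFn (s.ι.app p) ⟨b, hbp⟩ = homFn (s.ι.app q) ⟨b, hbq⟩ := by
  obtain ⟨r, hr, hpr, hqr⟩ := hdir p.1 q.1 p.2 q.2
  have h1 := s.w (homOfLE (show p ≤ (⟨r, hr⟩ : {p // P p}) from hpr))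
  have h2 := s.w (homOfLE (show q ≤ (⟨r, hr⟩ : {p // P p}) from hqr))
  have e1 : homFn (s.ι.app p) ⟨b, hbp⟩ = homFn (s.ι.app ⟨r, hr⟩) ⟨b, hpr hbp⟩ := by
    rw [← h1]; rfl
  have e2 : homFn (s.ι.app q) ⟨b, hbq⟩ = homFn (s.ι.app ⟨r, hr⟩) ⟨b, hqr hbq⟩ := by
    rw [← h2]; rfl
  rw [e1, e2]

variable (hcov : ∀ b : B.carrier, ∃ p, P p ∧ b ∈ p)

/-- The value of the descent map. -/
noncomputable def valFn (s : Cocone (diag B P hcomp)) (b : B.carrier) : s.pt.carrier :=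
  homFn (s.ι.app ⟨(hcov b).choose, (hcov b).choose_spec.1⟩) ⟨b, (hcov b).choose_spec.2⟩

include hdir in
lemma valFn_eq (s : Cocone (diag B P hcomp)) (b : B.carrier)
    {p : {p : Submodule 𝕜 B.carrier // P p}} (hb : b ∈ p.1) :
    valFn hcomp hcov s b = homFn (s.ι.app p) ⟨b, hb⟩ :=
  app_eq hcomp hdir s b _ hb

set_option maxHeartbeats 1000000 in
/-- The descent map for the colimit cocone. -/
noncomputable def descLI (s : Cocone (diag B P hcomp)) : B.carrier →ₗᵢ[𝕜] s.pt.carrier := by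
  refine ⟨⟨⟨valFn hcomp hcov s, ?_⟩, ?_⟩, ?_⟩
  · intro a b
    show valFn hcomp hcov s (a + b) = valFn hcomp hcov s a + valFn hcomp hcov s b
    obtain ⟨pa, hpa, hamem⟩ := hcov a
    obtain ⟨pb, hpb, hbmem⟩ := hcov b
    obtain ⟨r, hr, har, hbr⟩ := hdir pa pb hpa hpb
    have ha : a ∈ r := har hamem
    have hb : b ∈ r := hbr hbmem
    rw [valFn_eq hcomp hdir hcov s (a+b) (p := ⟨r, hr⟩) (r.add_mem ha hb),
      valFn_eq hcomp hdir hcov s a (p := ⟨r, hr⟩) ha,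
      valFn_eq hcomp hdir hcov s b (p := ⟨r, hr⟩) hb]
    have : (⟨a + b, r.add_mem ha hb⟩ : r) = ⟨a, ha⟩ + ⟨b, hb⟩ := rfl
    rw [this]
    exact (homFn (s.ι.app ⟨r, hr⟩)).map_add _ _
  · intro c b
    show valFn hcomp hcov s (c • b) = c • valFn hcomp hcov s b
    obtain ⟨pb, hpb, hbmem⟩ := hcov b
    rw [valFn_eq hcomp hdir hcov s (c • b) (p := ⟨pb, hpb⟩) (pb.smul_mem c hbmem),
      valFn_eq hcomp hdir hcov s b (p := ⟨pb, hpb⟩) hbmem]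
    have : (⟨c • b, pb.smul_mem c hbmem⟩ : pb) = c • ⟨b, hbmem⟩ := rfl
    rw [this]
    exact (homFn (s.ι.app ⟨pb, hpb⟩)).map_smul _ _
  · intro b
    obtain ⟨pb, hpb, hbmem⟩ := hcov b
    show ‖valFn hcomp hcov s b‖ = ‖b‖
    rw [valFn_eq hcomp hdir hcov s b (p := ⟨pb, hpb⟩) hbmem]
    exact (homFn (s.ι.app _)).norm_map _

/-- The cocone is a colimit. -/
noncomputable def isColimit : IsColimit (cocone B P hcomp) where
  desc s := toHom (descLI hcomp hdir hcov s)
  fac s p := by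
    apply LinearIsometry.ext
    rintro ⟨b, hb⟩
    exact app_eq hcomp hdir s b _ _
  uniq s m hm := by
    apply LinearIsometry.ext
    intro b
    have := congrArg (fun (g : _ →ₗᵢ[𝕜] _) => g ⟨b, (hcov b).choose_spec.2⟩)
      (hm ⟨(hcov b).choose, (hcov b).choose_spec.1⟩)
    exact this

end Diagram


section Preserve

variable (U : HilbCat 𝕜 ⥤ Type)
variable {B : HilbCat 𝕜} {P : Submodule 𝕜 B.carrier → Prop}
variable (hcomp : ∀ p, P p → CompleteSpace p)
  (hdir : ∀ p q, P p → P q → ∃ r, P r ∧ p ≤ r ∧ q ≤ r)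
  (hcov : ∀ b : B.carrier, ∃ p, P p ∧ b ∈ p)

include hdir in
lemma directed_subtype : IsDirected {p : Submodule 𝕜 B.carrier // P p} (· ≤ ·) := by
  constructor
  rintro ⟨p, hp⟩ ⟨q, hq⟩
  obtain ⟨r, hr, h1, h2⟩ := hdir p q hp hq
  exact ⟨⟨r, hr⟩, h1, h2⟩

include hdir hcov in
lemma exists_rep (hU : PreservesDirectedColimits U) (hne : Nonempty {p : Submodule 𝕜 B.carrier // P p})
    (x : U.obj B) :
    ∃ p : {p : Submodule 𝕜 B.carrier // P p},
      ∃ xp : U.obj ((diag B P hcomp).obj p),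
        U.map ((cocone B P hcomp).ι.app p) xp = x := by
  haveI := directed_subtype hdir
  haveI := hne
  obtain ⟨pres⟩ := hU {p : Submodule 𝕜 B.carrier // P p}
  have hc : IsColimit (U.mapCocone (cocone B P hcomp)) :=
    isColimitOfPreserves U (isColimit hcomp hdir hcov)
  obtain ⟨j, y, hy⟩ := Types.jointly_surjective _ hc x
  exact ⟨j, y, hy⟩

include hdir hcov in
lemma eq_detect (hU : PreservesDirectedColimits U)
    (p : {p : Submodule 𝕜 B.carrier // P p})
    (a b : U.obj ((diag B P hcomp).obj p))
    (h : U.map ((cocone B P hcomp).ι.app p) a = U.map ((cocone B P hcomp).ι.app p) b) :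
    ∃ q : {p : Submodule 𝕜 B.carrier // P p}, ∃ hpq : p ≤ q,
      U.map ((diag B P hcomp).map (homOfLE hpq)) a
        = U.map ((diag B P hcomp).map (homOfLE hpq)) b := by
  haveI := directed_subtype hdir
  haveI : Nonempty {p : Submodule 𝕜 B.carrier // P p} := ⟨p⟩
  obtain ⟨pres⟩ := hU {p : Submodule 𝕜 B.carrier // P p}
  have hc : IsColimit (U.mapCocone (cocone B P hcomp)) :=
    isColimitOfPreserves U (isColimit hcomp hdir hcov)
  have := (Types.FilteredColimit.isColimit_eq_iff (diag B P hcomp ⋙ U) hc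
    (i := p) (j := p) (xi := a) (xj := b)).1 h
  obtain ⟨k, f, g, hfg⟩ := this
  refine ⟨k, leOfHom f, ?_⟩
  have : g = f := Subsingleton.elim _ _
  rw [this] at hfg
  have : homOfLE (leOfHom f) = f := Subsingleton.elim _ _
  rw [this]
  exact hfg

end Preserve

/-- Every element of `U.obj A` is supported on a finite-dimensional subspace. -/
lemma exists_finite_supp (U : HilbCat 𝕜 ⥤ Type) (hU : PreservesDirectedColimits U)
    (A : HilbCat 𝕜) (x : U.obj A) :
    ∃ A₀ : Submodule 𝕜 A.carrier, FiniteDimensional 𝕜 A₀ ∧ SuppOn U A A₀ x := by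
  set P : Submodule 𝕜 A.carrier → Prop := fun p => FiniteDimensional 𝕜 p with hP
  have hcomp : ∀ p, P p → CompleteSpace p := fun p hp => by
    haveI : FiniteDimensional 𝕜 p := hp
    exact FiniteDimensional.complete 𝕜 p
  have hdir : ∀ p q, P p → P q → ∃ r, P r ∧ p ≤ r ∧ q ≤ r := fun p q hp hq => by
    haveI : FiniteDimensional 𝕜 p := hp
    haveI : FiniteDimensional 𝕜 q := hq
    exact ⟨p ⊔ q, inferInstance, le_sup_left, le_sup_right⟩
  have hcov : ∀ a : A.carrier, ∃ p, P p ∧ a ∈ p := fun a =>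
    ⟨Submodule.span 𝕜 {a}, inferInstance, Submodule.mem_span_singleton_self a⟩
  obtain ⟨p, xp, hxp⟩ := exists_rep U hcomp hdir hcov hU ⟨⟨⊥, inferInstance⟩⟩ x
  refine ⟨p.1, p.2, ?_⟩
  intro C f g hfg
  have hcomp_eq : (cocone A P hcomp).ι.app p ≫ f = (cocone A P hcomp).ι.app p ≫ g := by
    apply LinearIsometry.ext
    rintro ⟨a, ha⟩
    exact hfg a ha
  rw [← hxp]
  exact (FunctorToTypes.map_comp_apply U _ f xp).symm.trans
    ((congrArg (fun h => U.map h xp) hcomp_eq).trans (FunctorToTypes.map_comp_apply U _ g xp))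


open Submodule in
/-- Key fact: if `A₀ ⊆ A` is finite-dimensional, `A` is infinite-dimensional, and
`g : A → C` is an isometric embedding such that `C` is the closed span of the range of `g`
together with a finite-dimensional subspace `F`, then there is an isometric isomorphism
`A ≃ C` agreeing with `g` on `A₀`. -/
lemma keyfact (A C : HilbCat 𝕜) (hA : ¬ FiniteDimensional 𝕜 A.carrier)
    (A₀ : Submodule 𝕜 A.carrier) (hA₀ : FiniteDimensional 𝕜 A₀)
    (g : A.carrier →ₗᵢ[𝕜] C.carrier) (F : Submodule 𝕜 C.carrier)
    (hF : FiniteDimensional 𝕜 F)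
    (hdense : (LinearMap.range g.toLinearMap ⊔ F).topologicalClosure = ⊤) :
    ∃ u : A.carrier ≃ₗᵢ[𝕜] C.carrier, ∀ a ∈ A₀, u a = g a := by
  classical
  haveI := hA₀; haveI := hF
  -- an orthonormal set spanning A₀
  set ob := stdOrthonormalBasis 𝕜 A₀ with hob
  set v : Fin (Module.finrank 𝕜 A₀) → A.carrier := fun i => ((ob i : A₀) : A.carrier) with hv_def
  have hv : Orthonormal 𝕜 v := ob.orthonormal.comp_linearIsometry A₀.subtypeₗᵢ
  set s₀ : Set A.carrier := Set.range v with hs₀_def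
  have hs₀fin : s₀.Finite := Set.finite_range v
  have hs₀on : Orthonormal 𝕜 ((↑) : s₀ → A.carrier) := hv.toSubtypeRange
  have hspan₀ : span 𝕜 s₀ = A₀ := by
    have h1 : s₀ = A₀.subtype '' Set.range ⇑ob := by
      rw [← Set.range_comp]; rfl
    have h2 : span 𝕜 (Set.range ⇑ob) = ⊤ := by
      rw [← ob.coe_toBasis]; exact ob.toBasis.span_eq
    rw [h1, ← Submodule.map_span, h2, Submodule.map_top, Submodule.range_subtype]
  -- extend to a Hilbert basis of A
  obtain ⟨w, bw, hs₀w, hbw⟩ := hs₀on.exists_hilbertBasis_extension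
  have hginj : Function.Injective g := g.injective
  have hwspan : (span 𝕜 w).topologicalClosure = ⊤ := by
    have := bw.dense_span
    rwa [hbw, Subtype.range_coe] at this
  -- w is infinite
  have hwinf : w.Infinite := by
    intro hwfin
    apply hA
    haveI : FiniteDimensional 𝕜 (span 𝕜 w) := FiniteDimensional.span_of_finite 𝕜 hwfin
    have hcl : IsClosed ((span 𝕜 w : Submodule 𝕜 A.carrier) : Set A.carrier) :=
      Submodule.closed_of_finiteDimensional _
    have htop : span 𝕜 w = ⊤ := by
      rw [← hwspan, IsClosed.submodule_topologicalClosure_eq hcl]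
    exact Module.finite_def.2 ⟨hwfin.toFinset, by rw [Set.Finite.coe_toFinset, htop]⟩
  -- the image of w in C, an orthonormal set
  have hgwon : Orthonormal 𝕜 (fun i : w => g ↑i) := by
    have h := bw.orthonormal
    rw [hbw] at h
    exact h.comp_linearIsometry g
  have himg : Orthonormal 𝕜 ((↑) : (g '' w : Set C.carrier) → C.carrier) := by
    have h := hgwon.toSubtypeRange
    have he : Set.range (fun i : w => g ↑i) = g '' w := by
      rw [show (fun i : w => g ↑i) = g ∘ ((↑) : w → A.carrier) from rfl, Set.range_comp,
        Subtype.range_coe]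
    rwa [he] at h
  -- extend to a Hilbert basis of C
  obtain ⟨w', bw', hsub', hbw'⟩ := himg.exists_hilbertBasis_extension
  -- the closed span of g '' w contains the range of g
  set K : Submodule 𝕜 C.carrier := span 𝕜 (g '' w) with hK
  set Rc : Submodule 𝕜 C.carrier := K.topologicalClosure with hRc
  have hRcclosed : IsClosed (Rc : Set C.carrier) := K.isClosed_topologicalClosure
  haveI : CompleteSpace Rc := hRcclosed.completeSpace_coe
  have hrange : LinearMap.range g.toLinearMap ≤ Rc := by
    rintro y ⟨a, rfl⟩
    have ha : a ∈ closure ((span 𝕜 w : Submodule 𝕜 A.carrier) : Set A.carrier) := by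
      rw [← Submodule.topologicalClosure_coe, hwspan]; trivial
    have h1 : g a ∈ closure (⇑g '' ((span 𝕜 w : Submodule 𝕜 A.carrier) : Set A.carrier)) :=
      image_closure_subset_closure_image g.continuous ⟨a, ha, rfl⟩
    have h2 : ⇑g '' ((span 𝕜 w : Submodule 𝕜 A.carrier) : Set A.carrier) ⊆ (K : Set C.carrier) := by
      rw [show ⇑g '' ((span 𝕜 w : Submodule 𝕜 A.carrier) : Set A.carrier)
          = ((Submodule.map g.toLinearMap (span 𝕜 w) : Submodule 𝕜 C.carrier) : Set C.carrier)
          from rfl, Submodule.map_span]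
      exact Set.Subset.rfl
    have h3 : closure (⇑g '' ((span 𝕜 w : Submodule 𝕜 A.carrier) : Set A.carrier))
        ⊆ (Rc : Set C.carrier) :=
      closure_minimal (h2.trans (SetLike.coe_subset_coe.2 K.le_topologicalClosure)) hRcclosed
    exact h3 h1
  -- elements of w' not in g '' w lie in a fixed finite-dimensional subspace
  set T : C.carrier →L[𝕜] C.carrier :=
    ContinuousLinearMap.id 𝕜 C.carrier - Rc.subtypeL.comp (orthogonalProjection Rc) with hT
  set F'' : Submodule 𝕜 C.carrier := Submodule.map (T : C.carrier →ₗ[𝕜] C.carrier) F with hF''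
  haveI : FiniteDimensional 𝕜 F'' := Module.Finite.map F (T : C.carrier →ₗ[𝕜] C.carrier)
  have hdiff : ∀ x ∈ w' \ (⇑g '' w), x ∈ F'' := by
    intro x hx
    have hxw' : x ∈ w' := hx.1
    have hxK : x ∈ Kᗮ := by
      rw [Submodule.mem_orthogonal]
      intro y hy
      rw [hK] at hy
      induction hy using Submodule.span_induction with
      | mem y hy =>
          obtain ⟨aw, hawmem, rfl⟩ := hy
          have hne : (⟨g aw, hsub' (Set.mem_image_of_mem _ hawmem)⟩ : w') ≠ ⟨x, hxw'⟩ := by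
            intro hcon
            exact hx.2 ⟨aw, hawmem, congrArg Subtype.val hcon⟩
          have h := bw'.orthonormal.2 hne
          rw [hbw'] at h
          exact h
      | zero => exact inner_zero_left _
      | add y z hy hz hy' hz' => rw [inner_add_left, hy', hz', add_zero]
      | smul c y hy hy' => rw [inner_smul_left, hy', mul_zero]
    have hxRc : x ∈ Rcᗮ := by
      have h1 : Rcᗮ = Kᗮ := by
        rw [hRc, ← Submodule.orthogonal_orthogonal_eq_closure,
          Submodule.triorthogonal_eq_orthogonal]
      rwa [h1]
    have hPx : orthogonalProjection Rc x = 0 :=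
      Submodule.orthogonalProjectionOnto_apply_of_mem_orthogonal hxRc
    have hTx : T x = x := by
      rw [hT]
      simp [hPx]
    have hxtop : x ∈ closure
        ((LinearMap.range g.toLinearMap ⊔ F : Submodule 𝕜 C.carrier) : Set C.carrier) := by
      rw [← Submodule.topologicalClosure_coe, hdense]; trivial
    have h1 : T x ∈ closure
        (⇑T '' ((LinearMap.range g.toLinearMap ⊔ F : Submodule 𝕜 C.carrier) : Set C.carrier)) :=
      image_closure_subset_closure_image T.continuous ⟨x, hxtop, rfl⟩
    have h2 : ⇑T '' ((LinearMap.range g.toLinearMap ⊔ F : Submodule 𝕜 C.carrier) : Set C.carrier)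
        ⊆ (F'' : Set C.carrier) := by
      rintro y ⟨z, hz, rfl⟩
      obtain ⟨zr, hzr, zf, hzf, rfl⟩ := Submodule.mem_sup.1 hz
      have hzr' : T zr = 0 := by
        have hmem : zr ∈ Rc := hrange hzr
        rw [hT]
        simp only [ContinuousLinearMap.sub_apply, ContinuousLinearMap.id_apply,
          ContinuousLinearMap.comp_apply, Submodule.coe_subtypeL', Submodule.coe_subtype]
        rw [show ((orthogonalProjection Rc zr : Rc) : C.carrier) = zr from congrArg Subtype.val
          (Submodule.orthogonalProjectionOnto_mem_subspace_eq_self (K := Rc) ⟨zr, hmem⟩), sub_self]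
      have h3 : T (zr + zf) = T zf := by rw [map_add, hzr', zero_add]
      rw [h3]
      exact ⟨zf, hzf, rfl⟩
    have hclosedF'' : IsClosed (F'' : Set C.carrier) := Submodule.closed_of_finiteDimensional _
    have h4 := closure_minimal h2 hclosedF'' h1
    rwa [hTx] at h4
  -- cardinalities
  have hws₀ : Cardinal.mk s₀ < Cardinal.mk w :=
    lt_of_lt_of_le (Cardinal.lt_aleph0_iff_set_finite.2 hs₀fin)
      (Cardinal.infinite_iff.1 hwinf.to_subtype)
  have hinfw : Cardinal.aleph0 ≤ Cardinal.mk w := Cardinal.infinite_iff.1 hwinf.to_subtype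
  have hww' : Cardinal.mk w = Cardinal.mk w' := by
    have hTfin : (w' \ (⇑g '' w)).Finite := by
      have h0 := bw'.orthonormal.linearIndependent
      rw [hbw'] at h0
      have h1 : LinearIndependent 𝕜
          (fun x : (w' \ (⇑g '' w) : Set C.carrier) => (x.1 : C.carrier)) :=
        h0.comp (fun x : (w' \ (⇑g '' w) : Set C.carrier) => (⟨x.1, x.2.1⟩ : w'))
          (fun a b hab => Subtype.ext (Subtype.mk_eq_mk.1 hab))
      have h2 : LinearIndependent 𝕜
          (fun x : (w' \ (⇑g '' w) : Set C.carrier) => (⟨x.1, hdiff x.1 x.2⟩ : F'')) :=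
        h1.of_comp F''.subtype
      have h3 : Finite (w' \ (⇑g '' w) : Set C.carrier) := h2.finite
      exact Set.finite_coe_iff.1 h3
    have himgcard : Cardinal.mk (⇑g '' w : Set C.carrier) = Cardinal.mk w :=
      Cardinal.mk_image_eq hginj
    have hsum := Cardinal.mk_diff_add_mk hsub'
    apply le_antisymm
    · refine Cardinal.mk_le_of_injective
        (f := fun i : w => (⟨g i.1, hsub' ⟨i.1, i.2, rfl⟩⟩ : w')) ?_
      intro a b hab
      apply Subtype.ext
      apply hginj
      exact congrArg Subtype.val hab
    · rw [← hsum, himgcard]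
      have hfin : Cardinal.mk (w' \ (⇑g '' w) : Set C.carrier) < Cardinal.aleph0 :=
        Cardinal.lt_aleph0_iff_set_finite.2 hTfin
      exact le_of_eq (Cardinal.add_eq_right hinfw (le_of_lt (lt_of_lt_of_le hfin hinfw)))
  -- the bijection between the two bases, fixing s₀
  have hgs₀w' : ⇑g '' s₀ ⊆ w' := (Set.image_mono hs₀w).trans hsub'
  have h1 : Cardinal.mk (w \ s₀ : Set A.carrier) = Cardinal.mk w := by
    have h := Cardinal.mk_diff_add_mk hs₀w
    have h' : Cardinal.mk s₀ + Cardinal.mk (w \ s₀ : Set A.carrier) = Cardinal.mk w := by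
      rw [add_comm]; exact h
    exact Cardinal.eq_of_add_eq_of_aleph0_le h' hws₀ hinfw
  have h2 : Cardinal.mk (w' \ (⇑g '' s₀) : Set C.carrier) = Cardinal.mk w' := by
    have h := Cardinal.mk_diff_add_mk hgs₀w'
    have h' : Cardinal.mk (⇑g '' s₀ : Set C.carrier)
        + Cardinal.mk (w' \ (⇑g '' s₀) : Set C.carrier) = Cardinal.mk w' := by
      rw [add_comm]; exact h
    refine Cardinal.eq_of_add_eq_of_aleph0_le h' ?_ (hww' ▸ hinfw)
    rw [Cardinal.mk_image_eq hginj, ← hww']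
    exact hws₀
  obtain ⟨ediff⟩ := Cardinal.eq.1 (h1.trans (hww'.trans h2.symm))
  set eimg := Equiv.Set.image ⇑g s₀ hginj with heimg
  set σ : w ≃ w' :=
    (Equiv.Set.sumDiffSubset hs₀w).symm.trans
      ((eimg.sumCongr ediff).trans (Equiv.Set.sumDiffSubset hgs₀w')) with hσ
  have hσs₀ : ∀ (a : A.carrier) (ha : a ∈ s₀) (haw : a ∈ w),
      ((σ ⟨a, haw⟩ : w') : C.carrier) = g a := by
    intro a ha haw
    have hstep : (Equiv.Set.sumDiffSubset hs₀w).symm ⟨a, haw⟩ = Sum.inl ⟨a, ha⟩ :=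
      Equiv.Set.sumDiffSubset_symm_apply_of_mem hs₀w ha
    have hstep2 : σ ⟨a, haw⟩
        = (Equiv.Set.sumDiffSubset hgs₀w') ((eimg.sumCongr ediff) (Sum.inl ⟨a, ha⟩)) := by
      rw [hσ]
      simp only [Equiv.trans_apply, hstep]
    rw [hstep2]
    simp [heimg, Equiv.Set.sumDiffSubset_apply_inl]
  -- the reindexed Hilbert basis of C
  have hbon : Orthonormal 𝕜 (fun i : w => bw' (σ i)) := bw'.orthonormal.comp ⇑σ σ.injective
  have hbspan : ⊤ ≤ (span 𝕜 (Set.range (fun i : w => bw' (σ i)))).topologicalClosure := by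
    have hre : Set.range (fun i : w => bw' (σ i)) = Set.range ⇑bw' := by
      rw [show (fun i : w => bw' (σ i)) = ⇑bw' ∘ ⇑σ from rfl, Set.range_comp,
        Equiv.range_eq_univ, Set.image_univ]
    rw [hre, bw'.dense_span]
  set bw'' : HilbertBasis w 𝕜 C.carrier := HilbertBasis.mk hbon hbspan with hbw''
  set u := bw.repr.trans bw''.repr.symm with hu
  refine ⟨u, ?_⟩
  have hagree : Set.EqOn ⇑(u : A.carrier →ₗ[𝕜] C.carrier) ⇑g.toLinearMap s₀ := by
    intro a ha
    show u a = g a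
    have haw : a ∈ w := hs₀w ha
    have hb1 : bw ⟨a, haw⟩ = a := by rw [hbw]
    have he1 : u a = bw'' ⟨a, haw⟩ := by
      rw [hu]
      show bw''.repr.symm (bw.repr a) = bw'' ⟨a, haw⟩
      conv_lhs => rw [← hb1, bw.repr_self]
      exact bw''.repr_symm_single _
    rw [he1]
    have hcoe : bw'' ⟨a, haw⟩ = bw' (σ ⟨a, haw⟩) := congrFun (HilbertBasis.coe_mk hbon hbspan) _
    rw [hcoe, hbw']
    exact hσs₀ a ha haw
  intro a ha
  exact LinearMap.eqOn_span hagree (by rwa [hspan₀])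

end Stmt14Aux

/-- `U` maps every linear isometric embedding `f : A ⟶ B` with `A` infinite-dimensional to an
injective function `U(A) → U(B)`. -/
theorem stmt_14 (U : HilbCat 𝕜 ⥤ Type) (hU : PreservesDirectedColimits U)
    (A B : HilbCat 𝕜) (hA : ¬ FiniteDimensional 𝕜 A.carrier) (f : A ⟶ B) :
    Function.Injective (U.map f) := by
  intro x y hxy
  -- finite-dimensional supports for x and y
  obtain ⟨px, hpx, hsx⟩ := Stmt14Aux.exists_finite_supp U hU A x
  obtain ⟨py, hpy, hsy⟩ := Stmt14Aux.exists_finite_supp U hU A y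
  haveI := hpx; haveI := hpy
  set A₀ : Submodule 𝕜 A.carrier := px ⊔ py with hA₀
  have hA₀fin : FiniteDimensional 𝕜 A₀ := inferInstance
  have hsx' : SuppOn U A A₀ x := fun C fc gc hfg =>
    hsx C fc gc (fun a ha => hfg a (le_sup_left (a := px) (b := py) ha))
  have hsy' : SuppOn U A A₀ y := fun C fc gc hfg =>
    hsy C fc gc (fun a ha => hfg a (le_sup_right (a := px) (b := py) ha))
  -- the directed family of closed subspaces of B
  set Rc : Submodule 𝕜 B.carrier := (LinearMap.range (homFn f).toLinearMap).topologicalClosure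
    with hRc
  set P : Submodule 𝕜 B.carrier → Prop := fun Cs => ∃ F : Submodule 𝕜 B.carrier,
    FiniteDimensional 𝕜 F ∧ Cs = (Rc ⊔ F).topologicalClosure with hP
  have hcomp : ∀ p, P p → CompleteSpace p := by
    rintro p ⟨F, hF, rfl⟩
    exact (Submodule.isClosed_topologicalClosure _).completeSpace_coe
  have hdir : ∀ p q, P p → P q → ∃ r, P r ∧ p ≤ r ∧ q ≤ r := by
    rintro p q ⟨F1, hF1, rfl⟩ ⟨F2, hF2, rfl⟩
    haveI := hF1; haveI := hF2
    refine ⟨(Rc ⊔ (F1 ⊔ F2)).topologicalClosure, ⟨F1 ⊔ F2, inferInstance, rfl⟩, ?_, ?_⟩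
    · exact Submodule.topologicalClosure_mono (sup_le_sup_left le_sup_left _)
    · exact Submodule.topologicalClosure_mono (sup_le_sup_left le_sup_right _)
  have hcov : ∀ b, ∃ p, P p ∧ b ∈ p := fun b =>
    ⟨(Rc ⊔ Submodule.span 𝕜 {b}).topologicalClosure, ⟨Submodule.span 𝕜 {b}, inferInstance, rfl⟩,
      Submodule.le_topologicalClosure _
        (le_sup_right (a := Rc) (Submodule.mem_span_singleton_self b))⟩
  have hC₀ : P Rc := ⟨⊥, inferInstance, by
    rw [sup_bot_eq]
    exact (IsClosed.submodule_topologicalClosure_eq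
      (Submodule.isClosed_topologicalClosure _)).symm⟩
  set p₀ : {p : Submodule 𝕜 B.carrier // P p} := ⟨Rc, hC₀⟩ with hp₀
  -- factor f through Rc
  have hmem : ∀ a, homFn f a ∈ Rc := fun a =>
    Submodule.le_topologicalClosure _ (LinearMap.mem_range_self _ a)
  set f₀ : A.carrier →ₗᵢ[𝕜] ((Stmt14Aux.diag B P hcomp).obj p₀).carrier :=
    ⟨LinearMap.codRestrict Rc (homFn f).toLinearMap hmem, fun a => (homFn f).norm_map a⟩
    with hf₀
  have hfact : f = toHom f₀ ≫ (Stmt14Aux.cocone B P hcomp).ι.app p₀ := by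
    apply LinearIsometry.ext; intro a; rfl
  have hxy' : U.map ((Stmt14Aux.cocone B P hcomp).ι.app p₀) (U.map (toHom f₀) x)
      = U.map ((Stmt14Aux.cocone B P hcomp).ι.app p₀) (U.map (toHom f₀) y) := by
    rw [← FunctorToTypes.map_comp_apply, ← FunctorToTypes.map_comp_apply, ← hfact]
    exact hxy
  obtain ⟨q, hpq, heq⟩ := Stmt14Aux.eq_detect U hcomp hdir hcov hU p₀ _ _ hxy'
  set f' : A ⟶ (Stmt14Aux.diag B P hcomp).obj q :=
    toHom f₀ ≫ (Stmt14Aux.diag B P hcomp).map (homOfLE hpq) with hf'def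
  -- apply the key fact to f' : A ⟶ Cq
  obtain ⟨F, hFfin, hq⟩ := q.2
  haveI := hFfin
  have hFq : F ≤ q.1 := by
    rw [hq]; exact le_trans le_sup_right (Submodule.le_topologicalClosure _)
  have hFD : FiniteDimensional 𝕜 (Submodule.comap q.1.subtype F) :=
    (Submodule.comapSubtypeEquivOfLe hFq).symm.finiteDimensional
  have hf' : U.map f' x = U.map f' y := by
    rw [hf'def, FunctorToTypes.map_comp_apply, FunctorToTypes.map_comp_apply]
    exact heq
  have hsubcomp : q.1.subtype ∘ₗ (homFn f').toLinearMap = (homFn f).toLinearMap := by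
    rw [hf'def]
    apply LinearMap.ext; intro a; rfl
  have hdense : (LinearMap.range (homFn f').toLinearMap
      ⊔ Submodule.comap q.1.subtype F).topologicalClosure = ⊤ := by
    rw [eq_top_iff]
    rintro c -
    rw [← SetLike.mem_coe, Submodule.topologicalClosure_coe]
    refine closure_subtype.2 ?_
    have h1 : Subtype.val '' ((LinearMap.range (homFn f').toLinearMap
          ⊔ Submodule.comap q.1.subtype F
          : Submodule 𝕜 ((Stmt14Aux.diag B P hcomp).obj q).carrier) :
            Set ((Stmt14Aux.diag B P hcomp).obj q).carrier)
        = ((Submodule.map q.1.subtype (LinearMap.range (homFn f').toLinearMap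
            ⊔ Submodule.comap q.1.subtype F) : Submodule 𝕜 B.carrier) : Set B.carrier) := rfl
    have h2 : Submodule.map q.1.subtype
        (LinearMap.range (homFn f').toLinearMap ⊔ Submodule.comap q.1.subtype F)
        = LinearMap.range (homFn f).toLinearMap ⊔ F := by
      rw [Submodule.map_sup, show Submodule.map q.1.subtype (LinearMap.range (homFn f').toLinearMap)
          = LinearMap.range (homFn f).toLinearMap from by
            rw [← hsubcomp]; exact (LinearMap.range_comp _ _).symm]
      rw [Submodule.map_comap_subtype]
      rw [inf_of_le_right hFq]
    rw [h1, h2]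
    have hle : q.1 ≤ (LinearMap.range (homFn f).toLinearMap ⊔ F).topologicalClosure := by
      rw [hq]
      apply Submodule.topologicalClosure_minimal
      · apply sup_le
        · exact Submodule.topologicalClosure_mono le_sup_left
        · exact le_trans le_sup_right (Submodule.le_topologicalClosure _)
      · exact Submodule.isClosed_topologicalClosure _
    have hc := hle c.2
    rwa [← SetLike.mem_coe, Submodule.topologicalClosure_coe] at hc
  obtain ⟨u, hu⟩ := Stmt14Aux.keyfact A ((Stmt14Aux.diag B P hcomp).obj q) hA A₀ hA₀fin
    (homFn f') (Submodule.comap q.1.subtype F) hFD hdense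
  -- use the supports to replace f' by the isomorphism u
  have hux : U.map (toHom u.toLinearIsometry) x = U.map f' x :=
    hsx' ((Stmt14Aux.diag B P hcomp).obj q) (toHom u.toLinearIsometry) f'
      (fun a ha => hu a ha)
  have huy : U.map (toHom u.toLinearIsometry) y = U.map f' y :=
    hsy' ((Stmt14Aux.diag B P hcomp).obj q) (toHom u.toLinearIsometry) f'
      (fun a ha => hu a ha)
  have hu' : U.map (toHom u.toLinearIsometry) x = U.map (toHom u.toLinearIsometry) y := by
    rw [hux, huy]; exact hf'
  have hinv : toHom u.toLinearIsometry ≫ toHom u.symm.toLinearIsometry = 𝟙 A := by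
    apply LinearIsometry.ext; intro a; exact u.symm_apply_apply a
  calc x = U.map (𝟙 A) x := (FunctorToTypes.map_id_apply U x).symm
    _ = U.map (toHom u.symm.toLinearIsometry) (U.map (toHom u.toLinearIsometry) x) := by
        rw [← FunctorToTypes.map_comp_apply, hinv]
    _ = U.map (toHom u.symm.toLinearIsometry) (U.map (toHom u.toLinearIsometry) y) := by
        rw [hu']
    _ = U.map (𝟙 A) y := by rw [← FunctorToTypes.map_comp_apply, hinv]
    _ = y := FunctorToTypes.map_id_apply U y
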